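/- For x > 0 and δ ≥ 0, if F_{t_{ν,δ}}(x) denotes the noncentral t CDF, then P(T > x) = ∫_{−δ}^∞ Γ_l(ν/2, ν(z+δ)²/(2x²)) φ(z) dz, i.e., the upper-tail probability equals the integral of the lower regularized incomplete gamma function against the normal density over (−δ, ∞). -/

import Mathlib

open MeasureTheory ProbabilityTheory Real Set
open scoped ENNReal NNReal

/-- Standard normal probability density function φ. -/
noncomputable def stdNormalPDF (z : ℝ) : ℝ :=
  (Real.sqrt (2 * Real.pi))⁻¹ * Real.exp (- z ^ 2 / 2)

/-- Standard normal cumulative distribution function Φ. -/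
noncomputable def stdNormalCDF (x : ℝ) : ℝ := ∫ z in Set.Iic x, stdNormalPDF z

/-- Density of the chi-square distribution with ν degrees of freedom. -/
noncomputable def chiSqPDF (ν q : ℝ) : ℝ :=
  if 0 < q then ((1 : ℝ) / 2) ^ (ν / 2) / Real.Gamma (ν / 2) * q ^ (ν / 2 - 1) * Real.exp (- q / 2)
  else 0

/-- CDF of the chi-square distribution with ν degrees of freedom. -/
noncomputable def chiSqCDF (ν q : ℝ) : ℝ := ∫ t in Set.Iic q, chiSqPDF ν t

/-- Upper regularized incomplete gamma function Γ_u(a, x). -/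
noncomputable def upperRegGamma (a x : ℝ) : ℝ :=
  (∫ t in Set.Ioi x, Real.exp (-t) * t ^ (a - 1)) / Real.Gamma a

/-- Lower regularized incomplete gamma function Γ_l(a, x). -/
noncomputable def lowerRegGamma (a x : ℝ) : ℝ := 1 - upperRegGamma a x

/-- for x > 0 and δ ≥ 0,
P(T > x) = ∫_{−δ}^∞ Γ_l(ν/2, ν(z+δ)²/(2x²)) φ(z) dz. -/
lemma lowerRegGamma_eq (a : ℝ) (ha : 0 < a) (y : ℝ) (hy : 0 ≤ y) :
    lowerRegGamma a y = (∫ t in Ioc 0 y, Real.exp (-t) * t ^ (a - 1)) / Real.Gamma a := by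
  have hΓ : 0 < Real.Gamma a := Real.Gamma_pos_of_pos ha
  have hint : IntegrableOn (fun t => Real.exp (-t) * t ^ (a - 1)) (Ioi 0) :=
    Real.GammaIntegral_convergent ha
  have hsplit : Real.Gamma a
      = (∫ t in Ioc 0 y, Real.exp (-t) * t ^ (a - 1))
        + ∫ t in Ioi y, Real.exp (-t) * t ^ (a - 1) := by
    rw [Real.Gamma_eq_integral ha, ← Set.Ioc_union_Ioi_eq_Ioi hy,
      setIntegral_union (Set.Ioc_disjoint_Ioi le_rfl) measurableSet_Ioi
        (hint.mono_set (by intro t ht; exact ht.1))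
        (hint.mono_set (by intro t ht; exact lt_of_le_of_lt hy ht))]
  unfold lowerRegGamma upperRegGamma
  field_simp
  linarith

lemma gamma_Ioo_toReal (a : ℝ) (ha : 0 < a) (c : ℝ) (hc : 0 ≤ c) :
    ((gammaMeasure a (1/2)) (Ioo 0 c)).toReal = lowerRegGamma a (c / 2) := by
  have hΓ : 0 < Real.Gamma a := Real.Gamma_pos_of_pos ha
  rw [gammaMeasure, withDensity_apply _ measurableSet_Ioo]
  have h1 : (∫⁻ q in Ioo 0 c, gammaPDF a (1/2) q).toReal
      = ∫ q in Ioo 0 c, gammaPDFReal a (1/2) q := by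
    rw [integral_eq_lintegral_of_nonneg_ae
      (ae_of_all _ fun q => gammaPDFReal_nonneg ha (by norm_num) q)
      (measurable_gammaPDFReal a (1/2)).aestronglyMeasurable.restrict]
    rfl
  rw [h1, ← integral_Ioc_eq_integral_Ioo, ← intervalIntegral.integral_of_le hc]
  have h2 : ∀ q ∈ Set.uIcc 0 c, gammaPDFReal a (1/2) q
      = (fun t => (1 / (2 * Real.Gamma a)) * (Real.exp (-t) * t ^ (a - 1))) (q / 2) := by
    intro q hq
    rw [Set.uIcc_of_le hc] at hq
    have hq0 : 0 ≤ q := hq.1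
    simp only [gammaPDFReal, if_pos hq0]
    have : q ^ (a - 1) = 2 ^ (a - 1) * (q / 2) ^ (a - 1) := by
      rw [← Real.mul_rpow (by norm_num) (by linarith)]
      congr 1; ring
    rw [this]
    rw [show (-(1 / 2 * q)) = -(q/2) by ring]
    rw [Real.div_rpow (by norm_num) (by norm_num), Real.one_rpow]
    rw [show (2:ℝ) ^ (a-1) = 2 ^ a / 2 ^ (1:ℝ) from by rw [← Real.rpow_sub (by norm_num)]]
    rw [Real.rpow_one]
    field_simp
  rw [intervalIntegral.integral_congr h2,
    intervalIntegral.integral_comp_div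
      (fun t => 1 / (2 * Real.Gamma a) * (Real.exp (-t) * t ^ (a - 1))) (two_ne_zero),
    intervalIntegral.integral_const_mul, lowerRegGamma_eq a ha _ (by positivity),
    ← intervalIntegral.integral_of_le (by positivity)]
  simp only [zero_div, smul_eq_mul]
  field_simp

theorem noncentralT_upper_tail
    {Ω : Type*} [MeasurableSpace Ω] (P : Measure Ω) [IsProbabilityMeasure P]
    (Z Q : Ω → ℝ) (hZ : Measurable Z) (hQ : Measurable Q)
    (ν δ : ℝ) (hν : 0 < ν)
    (hZlaw : Measure.map Z P = ProbabilityTheory.gaussianReal 0 1)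
    (hQlaw : Measure.map Q P = ProbabilityTheory.gammaMeasure (ν / 2) (1 / 2))
    (hindep : ProbabilityTheory.IndepFun Z Q P)
    (x : ℝ) (hx : 0 < x) (hδ : 0 ≤ δ) :
    (P {ω | x < (Z ω + δ) / Real.sqrt (Q ω / ν)}).toReal
      = ∫ z in Set.Ioi (-δ),
          lowerRegGamma (ν / 2) (ν * (z + δ) ^ 2 / (2 * x ^ 2)) * stdNormalPDF z := by
  have ha : 0 < ν / 2 := by linarith
  set γ := gammaMeasure (ν / 2) (1/2) with hγdef
  haveI : IsProbabilityMeasure γ := isProbabilityMeasure_gammaMeasure ha (by norm_num)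
  set c : ℝ → ℝ := fun z => ν * (z + δ) ^ 2 / x ^ 2 with hcdef
  have hcpos : ∀ z, -δ < z → 0 < c z := by
    intro z hz
    have : 0 < z + δ := by linarith
    positivity
  have hcmeas : Measurable c := by fun_prop
  -- pointwise characterization
  have hiff : ∀ z q : ℝ, (x < (z + δ) / Real.sqrt (q / ν)) ↔ (-δ < z ∧ q ∈ Ioo 0 (c z)) := by
    intro z q
    constructor
    · intro h
      have hq : 0 < q := by
        by_contra hq
        push_neg at hq
        rw [Real.sqrt_eq_zero'.mpr (div_nonpos_of_nonpos_of_nonneg hq hν.le), div_zero] at h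
        linarith
      have hs : 0 < Real.sqrt (q / ν) := Real.sqrt_pos.mpr (div_pos hq hν)
      have hxs : x * Real.sqrt (q / ν) < z + δ := (lt_div_iff₀ hs).mp h
      have hzd : 0 < z + δ := lt_trans (by positivity) hxs
      have hz : -δ < z := by linarith
      refine ⟨hz, hq, ?_⟩
      have h1 : Real.sqrt (q / ν) < (z + δ) / x := (lt_div_iff₀ hx).mpr (by linarith [mul_comm x (Real.sqrt (q / ν))])
      have h2 : q / ν < ((z + δ) / x) ^ 2 := (Real.sqrt_lt' (div_pos hzd hx)).mp h1
      have h3 : q < ((z + δ) / x) ^ 2 * ν := (div_lt_iff₀ hν).mp h2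
      calc q < ((z + δ) / x) ^ 2 * ν := h3
        _ = c z := by rw [hcdef]; field_simp
    · rintro ⟨hz, hq, hqc⟩
      have hzd : 0 < z + δ := by linarith
      have hs : 0 < Real.sqrt (q / ν) := Real.sqrt_pos.mpr (div_pos hq hν)
      rw [lt_div_iff₀ hs]
      have h2 : q / ν < ((z + δ) / x) ^ 2 := by
        rw [div_lt_iff₀ hν]
        calc q < c z := hqc
          _ = ((z + δ) / x) ^ 2 * ν := by rw [hcdef]; field_simp
      have h1 : Real.sqrt (q / ν) < (z + δ) / x := (Real.sqrt_lt' (div_pos hzd hx)).mpr h2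
      calc x * Real.sqrt (q / ν) < x * ((z + δ) / x) := by
            exact mul_lt_mul_of_pos_left h1 hx
        _ = z + δ := by field_simp
  -- measurable set
  set S : Set (ℝ × ℝ) := {p : ℝ × ℝ | x < (p.1 + δ) / Real.sqrt (p.2 / ν)} with hSdef
  have hS : MeasurableSet S := by
    apply measurableSet_lt measurable_const
    fun_prop
  -- joint law
  have hmap : Measure.map (fun ω => (Z ω, Q ω)) P = (gaussianReal 0 1).prod γ := by
    rw [← hZlaw, ← hQlaw,
      ← (indepFun_iff_map_prod_eq_prod_map_map hZ.aemeasurable hQ.aemeasurable).mp hindep]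
  have hP : P {ω | x < (Z ω + δ) / Real.sqrt (Q ω / ν)} = ((gaussianReal 0 1).prod γ) S := by
    rw [← hmap, Measure.map_apply (hZ.prodMk hQ) hS]
    rfl
  -- indicator form of sections
  set G : ℝ → ℝ≥0∞ := (Ioi (-δ)).indicator (fun z => γ (Ioo 0 (c z))) with hGdef
  have hGsec : ∀ z, γ (Prod.mk z ⁻¹' S) = G z := by
    intro z
    have : Prod.mk z ⁻¹' S = {q | -δ < z ∧ q ∈ Ioo 0 (c z)} := by
      ext q; exact hiff z q
    rw [this, hGdef, Set.indicator_apply]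
    by_cases hz : -δ < z
    · rw [if_pos (mem_Ioi.mpr hz)]
      congr 1
      ext q; simp [hz]
    · rw [if_neg (fun h => hz (mem_Ioi.mp h))]
      have : {q | -δ < z ∧ q ∈ Ioo 0 (c z)} = (∅ : Set ℝ) := by
        ext q; simp [hz]
      rw [this, measure_empty]
  have hmono : Monotone fun t => γ (Ioo 0 t) :=
    fun s t hst => measure_mono (Ioo_subset_Ioo le_rfl hst)
  have hGmeas : Measurable G :=
    (Measurable.indicator ((hmono.measurable).comp hcmeas) measurableSet_Ioi)
  -- gaussian pdf
  have hpdf : ∀ z : ℝ, gaussianPDF 0 1 z = ENNReal.ofReal (stdNormalPDF z) := by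
    intro z
    rw [gaussianPDF_def, gaussianPDFReal_def]
    congr 1
    simp [stdNormalPDF]
  have hstdnn : ∀ z : ℝ, 0 ≤ stdNormalPDF z := by
    intro z
    unfold stdNormalPDF
    positivity
  -- the chain
  have hchain : P {ω | x < (Z ω + δ) / Real.sqrt (Q ω / ν)}
      = ∫⁻ z in Ioi (-δ),
          ENNReal.ofReal (lowerRegGamma (ν / 2) (ν * (z + δ) ^ 2 / (2 * x ^ 2)) * stdNormalPDF z) := by
    rw [hP, Measure.prod_apply hS]
    rw [lintegral_congr hGsec]
    rw [show gaussianReal 0 1 = volume.withDensity (gaussianPDF 0 1) from by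
      rw [gaussianReal_of_var_ne_zero]; norm_num]
    rw [lintegral_withDensity_eq_lintegral_mul _ (measurable_gaussianPDF 0 1) hGmeas]
    have hind : ∀ z, (gaussianPDF 0 1 * G) z
        = (Ioi (-δ)).indicator (fun z => gaussianPDF 0 1 z * γ (Ioo 0 (c z))) z := by
      intro z
      rw [Set.indicator_apply]
      by_cases hz : z ∈ Ioi (-δ)
      · rw [if_pos hz]
        simp only [Pi.mul_apply, hGdef, indicator_of_mem hz]
      · rw [if_neg hz]
        simp only [Pi.mul_apply, hGdef, indicator_of_notMem hz, mul_zero]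
    rw [lintegral_congr hind, lintegral_indicator measurableSet_Ioi]
    refine setLIntegral_congr_fun_ae measurableSet_Ioi (ae_of_all _ fun z hz => ?_)
    have hzpos := hcpos z hz
    have hL : γ (Ioo 0 (c z))
        = ENNReal.ofReal (lowerRegGamma (ν / 2) (ν * (z + δ) ^ 2 / (2 * x ^ 2))) := by
      have hfin : γ (Ioo 0 (c z)) ≠ ⊤ := measure_ne_top γ _
      have heq := gamma_Ioo_toReal (ν / 2) ha (c z) hzpos.le
      have harg : c z / 2 = ν * (z + δ) ^ 2 / (2 * x ^ 2) := by
        rw [hcdef]; ring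
      rw [harg] at heq
      rw [← heq, ENNReal.ofReal_toReal hfin]
    rw [hpdf z, hL, ← ENNReal.ofReal_mul (hstdnn z), mul_comm (stdNormalPDF z)]
  rw [hchain]
  have hLnn : ∀ z ∈ Ioi (-δ),
      0 ≤ lowerRegGamma (ν / 2) (ν * (z + δ) ^ 2 / (2 * x ^ 2)) * stdNormalPDF z := by
    intro z hz
    have hzpos := hcpos z hz
    have heq := gamma_Ioo_toReal (ν / 2) ha (c z) hzpos.le
    have harg : c z / 2 = ν * (z + δ) ^ 2 / (2 * x ^ 2) := by rw [hcdef]; ring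
    rw [harg] at heq
    exact mul_nonneg (heq ▸ ENNReal.toReal_nonneg) (hstdnn z)
  have hmeas2 : AEStronglyMeasurable
      (fun z => lowerRegGamma (ν / 2) (ν * (z + δ) ^ 2 / (2 * x ^ 2)) * stdNormalPDF z)
      (volume.restrict (Ioi (-δ))) := by
    have hm : Measurable fun z => (γ (Ioo 0 (c z))).toReal * stdNormalPDF z := by
      apply Measurable.mul
      · exact ((hmono.measurable).comp hcmeas).ennreal_toReal
      · unfold stdNormalPDF; fun_prop
    refine hm.aestronglyMeasurable.congr ?_
    rw [Filter.eventuallyEq_iff_exists_mem]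
    refine ⟨Ioi (-δ), ?_, fun z hz => ?_⟩
    · exact Filter.mem_of_superset (self_mem_ae_restrict measurableSet_Ioi) (fun z hz => hz)
    · have hzpos := hcpos z hz
      have heq := gamma_Ioo_toReal (ν / 2) ha (c z) hzpos.le
      have harg : c z / 2 = ν * (z + δ) ^ 2 / (2 * x ^ 2) := by rw [hcdef]; ring
      rw [harg] at heq
      simp only [hγdef]
      rw [heq]
  rw [integral_eq_lintegral_of_nonneg_ae
    ((ae_restrict_iff' measurableSet_Ioi).mpr (ae_of_all _ hLnn)) hmeas2]
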